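/- arXiv:2208.13325 — 5 statements merged into one kernel-verified Lean document; each statement's English description precedes it below -/
import Mathlib

section
/- Let n ≥ 1, let U be an n×n integer matrix with det U = ±1, let p and p_1,…,p_n be positive integers, and set B_f = U·diag(p/p_1,…,p/p_n) (an invertible n×n rational matrix). Then the labeling function f : I → ℚ^n defined by f(z) = (B_f z) mod p (componentwise reduction into [0,p)) is a bijection from the message space I = {0,…,p_1−1}×⋯×{0,…,p_n−1} onto the lattice code C(Λ_f, pℤ^n) = L(B_f) ∩ [0,p)^n. -/
/-- `qmod x m = x - m * ⌊x / m⌋`, the unique representative of `x` modulo `m` in `[0, m)`. -/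
def qmod (x m : ℚ) : ℚ := x - m * ⌊x / m⌋

lemma qmod_eq_fract (x p : ℚ) (hp : 0 < p) : qmod x p = p * Int.fract (x / p) := by
  unfold qmod Int.fract
  rw [mul_sub]
  rw [mul_div_cancel₀ x hp.ne']

lemma qmod_nonneg (x p : ℚ) (hp : 0 < p) : 0 ≤ qmod x p := by
  rw [qmod_eq_fract x p hp]
  exact mul_nonneg hp.le (Int.fract_nonneg _)

lemma qmod_lt (x p : ℚ) (hp : 0 < p) : qmod x p < p := by
  rw [qmod_eq_fract x p hp]
  calc p * Int.fract (x / p) < p * 1 := by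
        exact mul_lt_mul_of_pos_left (Int.fract_lt_one _) hp
    _ = p := mul_one p

lemma qmod_add_int_mul (x p : ℚ) (m : ℤ) (hp : 0 < p) :
    qmod (x + p * m) p = qmod x p := by
  unfold qmod
  have hpne : p ≠ 0 := hp.ne'
  have : (x + p * m) / p = x / p + m := by field_simp
  rw [this, Int.floor_add_intCast]
  push_cast
  ring

lemma qmod_eq_self {x p : ℚ} (h0 : 0 ≤ x) (h1 : x < p) : qmod x p = x := by
  have hp : 0 < p := lt_of_le_of_lt h0 h1
  unfold qmod
  have : ⌊x / p⌋ = 0 := by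
    rw [Int.floor_eq_zero_iff]
    constructor
    · positivity
    · rw [div_lt_one hp]; exact h1
  simp [this]

/-- the labeling function `f(z) = (B_f z) mod p` is a bijection from the
message space `I = {0,…,p₁−1} × ⋯ × {0,…,pₙ−1}` onto the lattice code
`C(Λ_f, pℤⁿ) = L(B_f) ∩ [0,p)ⁿ`. -/
theorem labeling_bijective (n : ℕ) (hn : 1 ≤ n)
    (U : Matrix (Fin n) (Fin n) ℤ) (hU : U.det = 1 ∨ U.det = -1)
    (p : ℤ) (hp : 0 < p) (ps : Fin n → ℤ) (hps : ∀ i, 0 < ps i)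
    (Bf : Matrix (Fin n) (Fin n) ℚ)
    (hBf : Bf = (U.map ((↑) : ℤ → ℚ)) * Matrix.diagonal fun i => (p : ℚ) / (ps i : ℚ)) :
    Set.BijOn
      (fun z : Fin n → ℤ => fun i => qmod (Bf.mulVec (fun j => (z j : ℚ)) i) (p : ℚ))
      {z : Fin n → ℤ | ∀ i, 0 ≤ z i ∧ z i < ps i}
      ({x : Fin n → ℚ | ∃ z : Fin n → ℤ, x = Bf.mulVec fun j => (z j : ℚ)} ∩
        {x : Fin n → ℚ | ∀ i, 0 ≤ x i ∧ x i < (p : ℚ)}) := by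
  have hpq : (0:ℚ) < (p:ℚ) := by exact_mod_cast hp
  have hUdet : IsUnit U.det := by
    rcases hU with h | h <;> simp [h]
  have hUW : ∀ k : Fin n → ℤ, U.mulVec (U⁻¹.mulVec k) = k := by
    intro k
    rw [Matrix.mulVec_mulVec, Matrix.mul_nonsing_inv U hUdet, Matrix.one_mulVec]
  -- the matrix Bf is invertible over ℚ
  have hBfdet : Bf.det ≠ 0 := by
    subst hBf
    rw [Matrix.det_mul, Matrix.det_diagonal]
    have h1 : (U.map ((↑) : ℤ → ℚ)).det = ((U.det : ℤ) : ℚ) :=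
      (RingHom.map_det (Int.castRingHom ℚ) U).symm
    have h2 : ((U.det : ℤ) : ℚ) ≠ 0 := by
      rcases hU with h | h <;> simp [h]
    have h3 : ∀ i : Fin n, (p : ℚ) / (ps i : ℚ) ≠ 0 := by
      intro i
      have : ((ps i : ℚ)) ≠ 0 := by exact_mod_cast (hps i).ne'
      exact div_ne_zero hpq.ne' this
    rw [h1]
    exact mul_ne_zero h2 (Finset.prod_ne_zero_iff.mpr fun i _ => h3 i)
  have hinj : Function.Injective Bf.mulVec :=
    Matrix.mulVec_injective_iff_isUnit.mpr
      ((Matrix.isUnit_iff_isUnit_det Bf).mpr (isUnit_iff_ne_zero.mpr hBfdet))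
  -- key computation: Bf (ps * w) = p * (U w)
  have key : ∀ w : Fin n → ℤ,
      Bf.mulVec (fun j => ((ps j * w j : ℤ) : ℚ)) =
        fun i => (p : ℚ) * ((U.mulVec w i : ℤ) : ℚ) := by
    intro w
    subst hBf
    rw [← Matrix.mulVec_mulVec]
    have hD : (Matrix.diagonal fun i => (p : ℚ) / (ps i : ℚ)).mulVec
        (fun j => ((ps j * w j : ℤ) : ℚ)) =
        (p : ℚ) • fun j => ((w j : ℤ) : ℚ) := by
      funext j
      rw [Matrix.mulVec_diagonal, Pi.smul_apply, smul_eq_mul]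
      have hpsj : ((ps j : ℚ)) ≠ 0 := by exact_mod_cast (hps j).ne'
      push_cast
      field_simp
    rw [hD, Matrix.mulVec_smul]
    funext i
    have := RingHom.map_mulVec (Int.castRingHom ℚ) U w i
    simp only [Int.coe_castRingHom] at this
    simp only [Pi.smul_apply, smul_eq_mul]
    congr 1
    exact this.symm
  -- derived: membership of images in the lattice shifted by p*k vectors
  constructor
  · -- MapsTo
    intro z hz
    set v : Fin n → ℚ := Bf.mulVec (fun j => (z j : ℚ)) with hv
    set k : Fin n → ℤ := fun i => ⌊v i / (p : ℚ)⌋ with hk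
    constructor
    · -- in the lattice
      refine ⟨fun i => z i - ps i * (U⁻¹.mulVec k) i, ?_⟩
      have : (fun j => ((z j - ps j * (U⁻¹.mulVec k) j : ℤ) : ℚ)) =
          (fun j => ((z j : ℤ) : ℚ)) - fun j => ((ps j * (U⁻¹.mulVec k) j : ℤ) : ℚ) := by
        funext j; simp only [Pi.sub_apply]; push_cast; ring
      rw [this, Matrix.mulVec_sub, key (U⁻¹.mulVec k), hUW k]
      funext i
      simp only [Pi.sub_apply, ← hv]
      unfold qmod
      simp only [hk]
    · intro i
      exact ⟨qmod_nonneg _ _ hpq, qmod_lt _ _ hpq⟩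
  constructor
  · -- InjOn
    intro z hz z' hz' heq
    set v : Fin n → ℚ := Bf.mulVec (fun j => (z j : ℚ)) with hv
    set v' : Fin n → ℚ := Bf.mulVec (fun j => (z' j : ℚ)) with hv'
    set k : Fin n → ℤ := fun i => ⌊v i / (p : ℚ)⌋ with hk
    set k' : Fin n → ℤ := fun i => ⌊v' i / (p : ℚ)⌋ with hk'
    set m : Fin n → ℤ := fun i => k i - k' i with hm
    have heq' : ∀ i, v i - (p : ℚ) * k i = v' i - (p : ℚ) * k' i := by
      intro i
      have := congrFun heq i
      simpa [qmod, hv, hv', hk, hk'] using this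
    have hBeq : Bf.mulVec (fun j => ((ps j * (U⁻¹.mulVec m) j : ℤ) : ℚ)) =
        Bf.mulVec ((fun j => ((z j : ℤ) : ℚ)) - fun j => ((z' j : ℤ) : ℚ)) := by
      rw [key (U⁻¹.mulVec m), hUW m, Matrix.mulVec_sub]
      funext i
      have := heq' i
      simp only [Pi.sub_apply, ← hv, ← hv', hm]
      push_cast
      linarith
    have := hinj hBeq
    funext i
    have hcast : ((ps i * (U⁻¹.mulVec m) i : ℤ) : ℚ) = ((z i : ℤ) : ℚ) - ((z' i : ℤ) : ℚ) := by
      have := congrFun this i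
      simpa using this
    have hzz : ps i * (U⁻¹.mulVec m) i = z i - z' i := by exact_mod_cast hcast
    have h1 := hz i
    have h2 := hz' i
    have hpsi := hps i
    set t := (U⁻¹.mulVec m) i with ht
    have hb1 : ps i * t < ps i * 1 := by rw [mul_one]; omega
    have hb2 : ps i * (-1) < ps i * t := by rw [mul_neg_one]; omega
    have ht1 : t < 1 := lt_of_mul_lt_mul_left hb1 hpsi.le
    have ht2 : (-1 : ℤ) < t := lt_of_mul_lt_mul_left hb2 hpsi.le
    have ht0 : t = 0 := by omega
    rw [ht0, mul_zero] at hzz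
    omega
  · -- SurjOn
    intro x hx
    obtain ⟨⟨z, hxz⟩, hxr⟩ := hx
    refine ⟨fun i => z i % ps i, fun i => ⟨Int.emod_nonneg _ (hps i).ne',
      Int.emod_lt_of_pos _ (hps i)⟩, ?_⟩
    set q : Fin n → ℤ := fun i => z i / ps i with hq
    have hsplit : (fun j => ((z j : ℤ) : ℚ)) =
        (fun j => ((z j % ps j : ℤ) : ℚ)) + fun j => ((ps j * q j : ℤ) : ℚ) := by
      funext j
      simp only [Pi.add_apply, hq]
      conv_lhs => rw [← Int.emod_add_mul_ediv (z j) (ps j)]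
      push_cast
      ring
    have hvz : Bf.mulVec (fun j => ((z j : ℤ) : ℚ)) =
        Bf.mulVec (fun j => ((z j % ps j : ℤ) : ℚ)) +
          fun i => (p : ℚ) * ((U.mulVec q i : ℤ) : ℚ) := by
      rw [hsplit, Matrix.mulVec_add, key q]
    funext i
    have hxi : Bf.mulVec (fun j => ((z j % ps j : ℤ) : ℚ)) i =
        x i + (p : ℚ) * ((-(U.mulVec q i) : ℤ) : ℚ) := by
      have := congrFun hvz i
      rw [← hxz] at this
      simp only [Pi.add_apply] at this
      push_cast
      linarith
    show qmod (Bf.mulVec (fun j => ((z j % ps j : ℤ) : ℚ)) i) (p : ℚ) = x i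
    rw [hxi]
    rw [qmod_add_int_mul _ _ _ hpq]
    exact qmod_eq_self (hxr i).1 (hxr i).2
end

section
/- Let n ≥ 1, let U be an n×n unimodular integer matrix, let p and p_1,…,p_n be positive integers, set B_f = U·diag(p/p_1,…,p/p_n), and let f(z) = (B_f z) mod p componentwise. Then for every z ∈ I = {0,…,p_1−1}×⋯×{0,…,p_n−1} and every index i, the i-th component of B_f^{−1} f(z) reduced modulo p_i equals z_i; i.e., the delabeling map x ↦ (B_f^{−1}x mod (p_1,…,p_n)) is a left inverse of f on I. -/
lemma map_mul_intQ {n : ℕ} (A B : Matrix (Fin n) (Fin n) ℤ) :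
    (A * B).map ((↑) : ℤ → ℚ) = A.map ((↑) : ℤ → ℚ) * B.map ((↑) : ℤ → ℚ) := by
  ext i j
  simp [Matrix.mul_apply, Matrix.map_apply]

lemma qmod_sub_int_mul (a m : ℚ) (b : ℤ) (hm : 0 < m) (h0 : 0 ≤ a) (h1 : a < m) :
    qmod (a - m * b) m = a := by
  unfold qmod
  have hdiv : (a - m * b) / m = a / m - b := by field_simp
  rw [hdiv, Int.floor_sub_intCast]
  have hfl : ⌊a / m⌋ = 0 := by
    rw [Int.floor_eq_zero_iff]
    constructor
    · positivity
    · rw [div_lt_one hm]; exact h1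
  rw [hfl]
  push_cast
  ring

/-- the delabeling map `x ↦ (B_f⁻¹ x mod (p₁,…,pₙ))` is a left inverse of the
labeling function `f(z) = (B_f z) mod p` on the message space
`I = {0,…,p₁−1} × ⋯ × {0,…,pₙ−1}`. -/
theorem delabeling_left_inverse (n : ℕ) (hn : 1 ≤ n)
    (U : Matrix (Fin n) (Fin n) ℤ) (hU : U.det = 1 ∨ U.det = -1)
    (p : ℤ) (hp : 0 < p) (ps : Fin n → ℤ) (hps : ∀ i, 0 < ps i)
    (Bf : Matrix (Fin n) (Fin n) ℚ)
    (hBf : Bf = (U.map ((↑) : ℤ → ℚ)) * Matrix.diagonal fun i => (p : ℚ) / (ps i : ℚ))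
    (f : (Fin n → ℤ) → (Fin n → ℚ))
    (hf : ∀ z, f z = fun i => qmod (Bf.mulVec (fun j => (z j : ℚ)) i) (p : ℚ)) :
    ∀ z ∈ {z : Fin n → ℤ | ∀ i, 0 ≤ z i ∧ z i < ps i},
      ∀ i, qmod (Bf⁻¹.mulVec (f z) i) ((ps i : ℚ)) = (z i : ℚ) := by
  intro z hz i
  -- integer inverse of U
  set V : Matrix (Fin n) (Fin n) ℤ := U.det • U.adjugate with hV
  have hdet2 : U.det * U.det = 1 := by rcases hU with h | h <;> rw [h] <;> norm_num
  have hUV : U * V = 1 := by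
    rw [hV, Matrix.mul_smul, Matrix.mul_adjugate, smul_smul, hdet2, one_smul]
  have hVU : V * U = 1 := by
    rw [hV, Matrix.smul_mul, Matrix.adjugate_mul, smul_smul, hdet2, one_smul]
  have hpq : (p : ℚ) ≠ 0 := by exact_mod_cast hp.ne'
  have hpsq : ∀ i, (ps i : ℚ) ≠ 0 := fun i => by exact_mod_cast (hps i).ne'
  set Vq : Matrix (Fin n) (Fin n) ℚ := V.map ((↑) : ℤ → ℚ) with hVq
  set C : Matrix (Fin n) (Fin n) ℚ :=
    (Matrix.diagonal fun i => (ps i : ℚ) / (p : ℚ)) * Vq with hC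
  have hBfC : Bf * C = 1 := by
    rw [hBf, hC, Matrix.mul_assoc, ← Matrix.mul_assoc (Matrix.diagonal _),
      Matrix.diagonal_mul_diagonal]
    have : (fun i => (p : ℚ) / (ps i : ℚ) * ((ps i : ℚ) / (p : ℚ))) = fun _ => (1 : ℚ) := by
      funext i
      rw [div_mul_div_comm, mul_comm ((p:ℚ))]
      exact div_self (mul_ne_zero (hpsq i) hpq)
    rw [this, Matrix.diagonal_one, Matrix.one_mul, hVq, ← map_mul_intQ, hUV]
    simp
  have hinv : Bf⁻¹ = C := Matrix.inv_eq_right_inv hBfC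
  have hVqBf : Vq * Bf = Matrix.diagonal fun i => (p : ℚ) / (ps i : ℚ) := by
    rw [hBf, ← Matrix.mul_assoc, hVq, ← map_mul_intQ, hVU]
    simp
  -- the floor vector
  set zq : Fin n → ℚ := fun j => (z j : ℚ) with hzq
  set k : Fin n → ℤ := fun j => ⌊Bf.mulVec zq j / (p : ℚ)⌋ with hk
  have hfz : f z = fun j => Bf.mulVec zq j - (p : ℚ) * (k j : ℚ) := by
    rw [hf z]; rfl
  -- compute Vq.mulVec (f z)
  have hmv : Vq.mulVec (f z) = fun j =>
      (p : ℚ) / (ps j : ℚ) * zq j - (p : ℚ) * ((V.mulVec k j : ℤ) : ℚ) := by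
    have h1 : f z = Bf.mulVec zq - (p : ℚ) • (fun j => (k j : ℚ)) := by
      rw [hfz]; funext j; simp [Pi.smul_apply, smul_eq_mul]
    rw [h1, Matrix.mulVec_sub, Matrix.mulVec_smul, Matrix.mulVec_mulVec, hVqBf]
    funext j
    simp only [Pi.sub_apply, Pi.smul_apply, smul_eq_mul, Matrix.mulVec_diagonal]
    congr 1
    rw [hVq]
    simp [Matrix.mulVec, dotProduct, Matrix.map_apply]
  have hcomp : Bf⁻¹.mulVec (f z) i = (z i : ℚ) - (ps i : ℚ) * ((V.mulVec k i : ℤ) : ℚ) := by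
    rw [hinv, hC, ← Matrix.mulVec_mulVec, hmv, Matrix.mulVec_diagonal]
    simp only [hzq]
    field_simp [hpsq i]
  rw [hcomp]
  have hzi := hz i
  exact qmod_sub_int_mul ((z i : ℚ)) (ps i : ℚ) (V.mulVec k i)
    (by exact_mod_cast hps i) (by exact_mod_cast hzi.1) (by exact_mod_cast hzi.2)
end

section
/- Let n ≥ 1, let U be an n×n unimodular integer matrix, let p and p_1,…,p_n be positive integers, set B_f = U·diag(p/p_1,…,p/p_n), and f(z) = (B_f z) mod p componentwise. Let z ∈ I = {0,…,p_1−1}×⋯×{0,…,p_n−1} and x = f(z). Suppose ν ∈ ℝ^n and w ∈ L(B_f) is a closest vector to ν in L(B_f), and additionally w ∈ pℤ^n. Then x + w is a closest vector to x + ν in L(B_f), and the delabeling of x + w recovers the message: for every i, the i-th component of B_f^{−1}(x + w) reduced modulo p_i equals z_i. -/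
/-- Euclidean norm on `ℝⁿ`. -/
noncomputable def enorm {n : ℕ} (v : Fin n → ℝ) : ℝ := Real.sqrt (∑ i, v i ^ 2)

lemma qmod_add_mul_int (a M : ℚ) (t : ℤ) (h0 : 0 ≤ a) (h1 : a < M) :
    qmod (a + M * t) M = a := by
  have hM : 0 < M := lt_of_le_of_lt h0 h1
  have hfl : ⌊(a + M * t) / M⌋ = t := by
    rw [add_div, mul_comm M (t : ℚ), mul_div_assoc, div_self hM.ne', mul_one,
      Int.floor_add_intCast]
    have h2 : ⌊a / M⌋ = 0 := by
      rw [Int.floor_eq_zero_iff]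
      exact ⟨div_nonneg h0 hM.le, (div_lt_one hM).2 h1⟩
    rw [h2, zero_add]
  unfold qmod
  rw [hfl]; ring

/-- if `w` is a closest vector to `ν` in `L(B_f)` and moreover `w ∈ pℤⁿ`,
then `x + w` is a closest vector to `x + ν` in `L(B_f)`, and delabeling `x + w`
recovers the message `z`. -/
theorem correct_decoding (n : ℕ) (hn : 1 ≤ n)
    (U : Matrix (Fin n) (Fin n) ℤ) (hU : U.det = 1 ∨ U.det = -1)
    (p : ℤ) (hp : 0 < p) (ps : Fin n → ℤ) (hps : ∀ i, 0 < ps i)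
    (Bf : Matrix (Fin n) (Fin n) ℚ)
    (hBf : Bf = (U.map ((↑) : ℤ → ℚ)) * Matrix.diagonal fun i => (p : ℚ) / (ps i : ℚ))
    (z : Fin n → ℤ) (hz : ∀ i, 0 ≤ z i ∧ z i < ps i)
    (x : Fin n → ℚ)
    (hx : x = fun i => qmod (Bf.mulVec (fun j => (z j : ℚ)) i) (p : ℚ))
    -- the real lattice L(B_f)
    (L : Set (Fin n → ℝ))
    (hL : L = {v : Fin n → ℝ |
      ∃ c : Fin n → ℤ, v = (Bf.map ((↑) : ℚ → ℝ)).mulVec fun j => (c j : ℝ)})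
    (ν w : Fin n → ℝ)
    (hwL : w ∈ L)
    (hwclosest : ∀ w' ∈ L, _root_.enorm (ν - w) ≤ _root_.enorm (ν - w'))
    -- w ∈ pℤⁿ
    (m : Fin n → ℤ) (hw : w = fun i => (p : ℝ) * (m i : ℝ)) :
    ((fun i => ((x i : ℝ)) + w i) ∈ L ∧
      ∀ w' ∈ L, _root_.enorm ((fun i => (x i : ℝ) + ν i) - fun i => (x i : ℝ) + w i) ≤
        _root_.enorm ((fun i => (x i : ℝ) + ν i) - w')) ∧
    ∀ i, qmod (Bf⁻¹.mulVec (fun j => x j + (p : ℚ) * (m j : ℚ)) i) ((ps i : ℚ)) = (z i : ℚ) := by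
  have hpQ : ((p : ℚ)) ≠ 0 := Int.cast_ne_zero.2 hp.ne'
  have hpsQ : ∀ i, ((ps i : ℚ)) ≠ 0 := fun i => Int.cast_ne_zero.2 (hps i).ne'
  have hdet : IsUnit U.det := by
    rcases hU with h | h <;> rw [h]
    · exact isUnit_one
    · exact isUnit_one.neg
  set V : Matrix (Fin n) (Fin n) ℤ := U⁻¹ with hV
  have hUV : U * V = 1 := Matrix.mul_nonsing_inv U hdet
  -- map to ℚ
  have hmapU : (U.map ((↑) : ℤ → ℚ)) = U.map (Int.castRingHom ℚ) := rfl
  have hUVQ : (U.map ((↑) : ℤ → ℚ)) * (V.map ((↑) : ℤ → ℚ)) = 1 := by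
    rw [hmapU, show (V.map ((↑) : ℤ → ℚ)) = V.map (Int.castRingHom ℚ) from rfl,
      ← Matrix.map_mul, hUV]
    simp
  set C : Matrix (Fin n) (Fin n) ℚ :=
    (Matrix.diagonal fun i => (ps i : ℚ) / (p : ℚ)) * V.map ((↑) : ℤ → ℚ) with hC
  have hBfC : Bf * C = 1 := by
    rw [hBf, hC, Matrix.mul_assoc, ← Matrix.mul_assoc (Matrix.diagonal _),
      Matrix.diagonal_mul_diagonal]
    have : (fun i => (p : ℚ) / (ps i : ℚ) * ((ps i : ℚ) / (p : ℚ))) = fun _ => (1 : ℚ) := by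
      funext i
      rw [div_mul_div_comm, mul_comm ((ps i : ℚ)) ((p : ℚ))]
      exact div_self (mul_ne_zero hpQ (hpsQ i))
    rw [this, Matrix.diagonal_one, Matrix.one_mul, hUVQ]
  have hBfinv : Bf⁻¹ = C := Matrix.inv_eq_right_inv hBfC
  have hCBf : C * Bf = 1 := mul_eq_one_comm.mp hBfC
  set D : Matrix (Fin n) (Fin n) ℤ := Matrix.diagonal ps * V with hD
  have hDmap : D.map ((↑) : ℤ → ℚ)
      = (Matrix.diagonal fun i => (ps i : ℚ)) * V.map ((↑) : ℤ → ℚ) := by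
    have h1 : D.map ((↑) : ℤ → ℚ) = D.map (Int.castRingHom ℚ) := rfl
    rw [h1, hD, Matrix.map_mul]
    congr 1
    · rw [Matrix.diagonal_map (by simp)]
      rfl
  have hBfD : Bf * D.map ((↑) : ℤ → ℚ) = (p : ℚ) • 1 := by
    rw [hBf, hDmap, Matrix.mul_assoc, ← Matrix.mul_assoc (Matrix.diagonal _),
      Matrix.diagonal_mul_diagonal]
    have : (fun i => (p : ℚ) / (ps i : ℚ) * (ps i : ℚ)) = fun _ => (p : ℚ) := by
      funext i; exact div_mul_cancel₀ _ (hpsQ i)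
    rw [this]
    have hdiag : (Matrix.diagonal fun _ : Fin n => (p : ℚ)) = (p : ℚ) • 1 := by
      rw [Matrix.smul_one_eq_diagonal]
    rw [hdiag, Matrix.smul_mul, Matrix.one_mul, Matrix.mul_smul, hUVQ]
  -- key fact F1
  have F1 : ∀ v : Fin n → ℤ,
      Bf.mulVec (fun j => ((D.mulVec v) j : ℚ)) = fun i => (p : ℚ) * (v i : ℚ) := by
    intro v
    have hcast : (fun j => (((D.mulVec v) j : ℤ) : ℚ))
        = (D.map ((↑) : ℤ → ℚ)).mulVec fun j => (v j : ℚ) := by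
      funext j
      exact RingHom.map_mulVec (Int.castRingHom ℚ) D v j
    rw [hcast, Matrix.mulVec_mulVec, hBfD, Matrix.smul_mulVec, Matrix.one_mulVec]
    rfl
  set k : Fin n → ℤ := fun i => ⌊(Bf.mulVec fun j => (z j : ℚ)) i / (p : ℚ)⌋ with hk
  have hxk : ∀ i, x i = (Bf.mulVec fun j => (z j : ℚ)) i - (p : ℚ) * (k i : ℚ) := by
    intro i; rw [hx]; rfl
  set c : Fin n → ℤ := fun i => z i + D.mulVec (m - k) i with hc
  have hxc : (fun j => x j + (p : ℚ) * (m j : ℚ)) = Bf.mulVec fun j => (c j : ℚ) := by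
    have : (fun j => ((c j : ℤ) : ℚ)) =
        (fun j => (z j : ℚ)) + fun j => ((D.mulVec (m - k) j : ℤ) : ℚ) := by
      funext j; rw [hc]; push_cast; rfl
    rw [this, Matrix.mulVec_add, F1 (m - k)]
    funext i
    rw [Pi.add_apply, hxk i]
    push_cast [Pi.sub_apply]
    ring
  -- x itself is a lattice vector (over ℚ) with integer coefficients c0
  set c0 : Fin n → ℤ := fun i => z i - D.mulVec k i with hc0
  have hxc0 : (fun j => x j) = Bf.mulVec fun j => (c0 j : ℚ) := by
    have : (fun j => ((c0 j : ℤ) : ℚ)) =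
        (fun j => (z j : ℚ)) - fun j => ((D.mulVec k j : ℤ) : ℚ) := by
      funext j; rw [hc0]; push_cast; rfl
    rw [this, Matrix.mulVec_sub, F1 k]
    funext i
    rw [Pi.sub_apply, hxk i]
  -- transfer ℚ lattice identities to ℝ
  have toR : ∀ (d : Fin n → ℤ) (y : Fin n → ℚ),
      (fun j => y j) = Bf.mulVec (fun j => (d j : ℚ)) →
      (fun i => (y i : ℝ)) = (Bf.map ((↑) : ℚ → ℝ)).mulVec fun j => (d j : ℝ) := by
    intro d y hy
    funext i
    have h1 : y i = Bf.mulVec (fun j => (d j : ℚ)) i := congrFun hy i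
    rw [h1]
    have := RingHom.map_mulVec (Rat.castHom ℝ) Bf (fun j => (d j : ℚ)) i
    simp only [Rat.coe_castHom] at this
    rw [this]
    congr 1
  constructor
  · constructor
    · rw [hL]
      refine ⟨c, ?_⟩
      have := toR c (fun j => x j + (p : ℚ) * (m j : ℚ)) hxc
      rw [← this]
      funext i
      rw [hw]
      push_cast
      ring
    · intro w' hw'
      rcases hL ▸ hw' with ⟨c', hc'⟩
      have hxR : (fun i => ((x i : ℝ))) = (Bf.map ((↑) : ℚ → ℝ)).mulVec fun j => (c0 j : ℝ) :=
        toR c0 x hxc0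
      have hmem : (w' - fun i => ((x i : ℝ))) ∈ L := by
        rw [hL]
        refine ⟨c' - c0, ?_⟩
        have hv : (fun j => (((c' - c0) j : ℤ) : ℝ))
            = (fun j => ((c' j : ℤ) : ℝ)) - fun j => ((c0 j : ℤ) : ℝ) := by
          funext j; push_cast [Pi.sub_apply]; rfl
        rw [hc', hxR, hv, Matrix.mulVec_sub]
      have h1 : ((fun i => (x i : ℝ) + ν i) - fun i => (x i : ℝ) + w i) = ν - w := by
        funext i; simp only [Pi.sub_apply]; ring
      have h2 : ((fun i => (x i : ℝ) + ν i) - w') = ν - (w' - fun i => ((x i : ℝ))) := by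
        funext i; simp only [Pi.sub_apply]; ring
      rw [h1, h2]
      exact hwclosest _ hmem
  · intro i
    have hmv : Bf⁻¹.mulVec (fun j => x j + (p : ℚ) * (m j : ℚ)) = fun j => (c j : ℚ) := by
      rw [hxc, hBfinv, Matrix.mulVec_mulVec, hCBf, Matrix.one_mulVec]
    rw [hmv]
    show qmod ((c i : ℚ)) ((ps i : ℚ)) = (z i : ℚ)
    have hci : (c i : ℚ) = (z i : ℚ) + (ps i : ℚ) * ((V.mulVec (m - k)) i : ℚ) := by
      have : D.mulVec (m - k) i = ps i * (V.mulVec (m - k)) i := by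
        rw [hD, ← Matrix.mulVec_mulVec, Matrix.mulVec_diagonal]
      rw [hc]
      push_cast [this]
      ring
    rw [hci]
    exact qmod_add_mul_int _ _ _ (by exact_mod_cast (hz i).1) (by exact_mod_cast (hz i).2)
end

section
/- Let a ≥ 1, let 1 ≤ k_0 ≤ k_1 ≤ ⋯ ≤ k_{a−1} ≤ k_a = n be integers, and let G be an n×n integer matrix with all entries in {0,1} and det G = ±1. For 0 ≤ i ≤ a−1 let S_i = {G u : u ∈ {0,1}^n with u_j = 0 for all j > k_i}. Define the Construction-D set Λ_D = { s_0 + 2 s_1 + 4 s_2 + ⋯ + 2^{a−1} s_{a−1} + 2^a m : s_i ∈ S_i, m ∈ ℤ^n }. Then Λ_D = L(G·D), where D is the n×n diagonal matrix whose j-th diagonal entry is 2^{i(j)} with i(j) = min{ i ∈ {0,…,a} : j ≤ k_i }. In particular, Λ_D is a lattice and 2^a ℤ^n ⊆ Λ_D. -/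
lemma ediv_mul_two (x m : ℤ) (hm : 0 < m) : x / (m * 2) = x / m / 2 := by
  have h1 : m * 2 * (x/(m*2)) + x % (m*2) = x := Int.mul_ediv_add_emod _ _
  have hr0 : 0 ≤ x % (m*2) := Int.emod_nonneg _ (by positivity)
  have hr1 : x % (m*2) < m*2 := Int.emod_lt_of_pos _ (by positivity)
  set q := x/(m*2) with hq
  set r := x % (m*2) with hrr
  have h2 : x / m = 2*q + r/m := by
    rw [← h1, show m*2*q + r = r + 2*q*m by ring, Int.add_mul_ediv_right _ _ hm.ne', add_comm]
  have h3 : 0 ≤ r / m := Int.ediv_nonneg hr0 hm.le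
  have h4 : r / m < 2 := by
    rw [Int.ediv_lt_iff_lt_mul hm]; linarith
  rw [h2]; omega

lemma digit_sum (a : ℕ) (x : ℤ) :
    (∑ i ∈ Finset.range a, (2:ℤ)^i * ((x / 2^i) % 2)) + 2^a * (x / 2^a) = x := by
  induction a with
  | zero => simp
  | succ a ih =>
    rw [Finset.sum_range_succ]
    have h2 : x / 2^(a+1) = (x / 2^a) / 2 := by
      rw [pow_succ]; exact ediv_mul_two x _ (by positivity)
    have h3 := Int.mul_ediv_add_emod (x / 2^a) 2
    rw [h2]
    linear_combination ih + (2:ℤ)^a * h3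

lemma digit_zero (e i : ℕ) (x : ℤ) (hi : i < e) (hdvd : (2:ℤ)^e ∣ x) :
    (x / 2^i) % 2 = 0 := by
  obtain ⟨t, rfl⟩ := hdvd
  have h : (2:ℤ)^e = 2^i * 2^(e - i) := by
    rw [← pow_add]; congr 1; omega
  rw [h, mul_assoc, Int.mul_ediv_cancel_left _ (by positivity)]
  have : (2:ℤ) ∣ 2^(e-i) * t := Dvd.dvd.mul_right (dvd_pow_self 2 (by omega)) t
  omega

/-- the Construction-D set built from nested binary codes generated by
initial segments of the columns of a unimodular 0–1 matrix `G` equals the lattice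
`L(G·D)` where `D = diag(2^{i(j)})`, `i(j) = min{i ∈ {0,…,a} : j ≤ k_i}`; in particular
`2^a ℤⁿ ⊆ Λ_D`. -/
theorem constructionD_basis (a n : ℕ) (ha : 1 ≤ a)
    (k : ℕ → ℕ) (hmono : ∀ i j, i ≤ j → j ≤ a → k i ≤ k j)
    (hk0 : 1 ≤ k 0) (hka : k a = n)
    (G : Matrix (Fin n) (Fin n) ℤ) (hG01 : ∀ i j, G i j = 0 ∨ G i j = 1)
    (hGdet : G.det = 1 ∨ G.det = -1)
    (S : ℕ → Set (Fin n → ℤ))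
    (hS : ∀ i, S i = {y | ∃ u : Fin n → ℤ, (∀ j, u j = 0 ∨ u j = 1) ∧
      (∀ j : Fin n, k i ≤ (j : ℕ) → u j = 0) ∧ y = G.mulVec u})
    (D : Matrix (Fin n) (Fin n) ℤ)
    (hD : D = Matrix.diagonal fun j : Fin n =>
      (2 : ℤ) ^ sInf {i : ℕ | i ≤ a ∧ (j : ℕ) < k i}) :
    {y : Fin n → ℤ | ∃ s : ℕ → Fin n → ℤ, (∀ i < a, s i ∈ S i) ∧
        ∃ m : Fin n → ℤ,
          y = (∑ i ∈ Finset.range a, (2 : ℤ) ^ i • s i) + (2 : ℤ) ^ a • m} =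
      {y : Fin n → ℤ | ∃ z : Fin n → ℤ, y = (G * D).mulVec z} ∧
    ∀ m : Fin n → ℤ,
      (fun j => (2 : ℤ) ^ a * m j) ∈
        {y : Fin n → ℤ | ∃ z : Fin n → ℤ, y = (G * D).mulVec z} := by
  -- the exponent function
  set e : Fin n → ℕ := fun j => sInf {i : ℕ | i ≤ a ∧ (j : ℕ) < k i} with he
  have hmem : ∀ j : Fin n, a ∈ {i : ℕ | i ≤ a ∧ (j : ℕ) < k i} :=
    fun j => ⟨le_refl a, hka ▸ j.isLt⟩
  have hea : ∀ j, e j ≤ a := fun j => Nat.sInf_le (hmem j)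
  have hjke : ∀ j : Fin n, (j : ℕ) < k (e j) :=
    fun j => (Nat.sInf_mem (⟨a, hmem j⟩ : {i : ℕ | i ≤ a ∧ (j : ℕ) < k i}.Nonempty)).2
  have hlt : ∀ (i : ℕ) (j : Fin n), i ≤ a → k i ≤ (j : ℕ) → i < e j := by
    intro i j hia hkij
    by_contra h
    push_neg at h
    exact absurd (lt_of_lt_of_le (hjke j) (hmono (e j) i h hia)) (not_lt.2 hkij)
  -- G is invertible over ℤ
  have hunit : IsUnit G.det := by
    rcases hGdet with h | h <;> rw [h] <;> simp [Int.isUnit_iff]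
  haveI : Invertible G := G.invertibleOfIsUnitDet hunit
  have hGinv : ∀ v : Fin n → ℤ, G.mulVec ((⅟G).mulVec v) = v := by
    intro v
    rw [Matrix.mulVec_mulVec, mul_invOf_self, Matrix.one_mulVec]
  -- D.mulVec acts diagonally
  have hDmul : ∀ z : Fin n → ℤ, D.mulVec z = fun j => 2 ^ (e j) * z j := by
    intro z; funext j
    rw [hD]
    simp [Matrix.mulVec_diagonal]; exact Or.inl rfl
  -- mulVec is linear
  have hlin : ∀ (f : ℕ → Fin n → ℤ) (w : Fin n → ℤ) (c : ℤ),
      G.mulVec ((∑ i ∈ Finset.range a, (2:ℤ)^i • f i) + c • w)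
        = (∑ i ∈ Finset.range a, (2:ℤ)^i • G.mulVec (f i)) + c • G.mulVec w := by
    intro f w c
    rw [Matrix.mulVec_add]
    congr 1
    · rw [show G.mulVec (∑ i ∈ Finset.range a, (2:ℤ)^i • f i)
          = G.mulVecLin (∑ i ∈ Finset.range a, (2:ℤ)^i • f i) from rfl, map_sum]
      refine Finset.sum_congr rfl fun i _ => ?_
      rw [map_smul]; rfl
    · rw [show G.mulVec (c • w) = G.mulVecLin (c • w) from rfl, map_smul]; rfl
  have key : {y : Fin n → ℤ | ∃ s : ℕ → Fin n → ℤ, (∀ i < a, s i ∈ S i) ∧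
        ∃ m : Fin n → ℤ,
          y = (∑ i ∈ Finset.range a, (2 : ℤ) ^ i • s i) + (2 : ℤ) ^ a • m} =
      {y : Fin n → ℤ | ∃ z : Fin n → ℤ, y = (G * D).mulVec z} := by
    ext y
    simp only [Set.mem_setOf_eq]
    constructor
    · rintro ⟨s, hs, m, rfl⟩
      -- choose binary vectors u i for each i < a
      choose u hu using fun (i : Fin a) => by
        have := hs i i.isLt
        rw [hS i] at this
        exact this
      set u' : ℕ → Fin n → ℤ := fun i => if h : i < a then u ⟨i, h⟩ else 0 with hu'
      set w := (⅟G).mulVec m with hw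
      set v : Fin n → ℤ := (∑ i ∈ Finset.range a, (2:ℤ)^i • u' i) + (2:ℤ)^a • w with hv
      have hy : (∑ i ∈ Finset.range a, (2:ℤ)^i • s i) + (2:ℤ)^a • m = G.mulVec v := by
        rw [hv, hlin u' w ((2:ℤ)^a), hGinv]
        congr 1
        refine Finset.sum_congr rfl fun i hi => ?_
        rw [Finset.mem_range] at hi
        rw [show u' i = u ⟨i, hi⟩ from dif_pos hi, ← (hu ⟨i, hi⟩).2.2]
      have hdvd : ∀ j, (2:ℤ)^(e j) ∣ v j := by
        intro j
        rw [hv]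
        simp only [Pi.add_apply, Finset.sum_apply, Pi.smul_apply, smul_eq_mul]
        apply dvd_add
        · apply Finset.dvd_sum
          intro i hi
          rw [Finset.mem_range] at hi
          rcases lt_or_ge i (e j) with h | h
          · have hnot : i ∉ {i : ℕ | i ≤ a ∧ (j : ℕ) < k i} := Nat.notMem_of_lt_sInf h
            have hki : k i ≤ (j : ℕ) := by
              by_contra hc
              exact hnot ⟨hi.le, not_le.mp hc⟩
            have : u' i j = 0 := by
              rw [show u' i = u ⟨i, hi⟩ from dif_pos hi]
              exact (hu ⟨i, hi⟩).2.1 j hki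
            rw [this, mul_zero]
            exact dvd_zero _
          · exact Dvd.dvd.mul_right (pow_dvd_pow 2 h) _
        · exact Dvd.dvd.mul_right (pow_dvd_pow 2 (hea j)) _
      refine ⟨fun j => v j / 2^(e j), ?_⟩
      rw [hy, ← Matrix.mulVec_mulVec, hDmul]
      exact congrArg _ (funext fun j => (Int.mul_ediv_cancel' (hdvd j)).symm)
    · rintro ⟨z, rfl⟩
      set x : Fin n → ℤ := fun j => 2^(e j) * z j with hx
      have hGx : (G * D).mulVec z = G.mulVec x := by
        rw [← Matrix.mulVec_mulVec, hDmul]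
      set b : ℕ → Fin n → ℤ := fun i j => (x j / 2^i) % 2 with hb
      refine ⟨fun i => G.mulVec (b i), ?_, G.mulVec (fun j => x j / 2^a), ?_⟩
      · intro i hia
        rw [hS i]
        refine ⟨b i, fun j => Int.emod_two_eq_zero_or_one _, ?_, rfl⟩
        intro j hkij
        exact digit_zero (e j) i (x j) (hlt i j hia.le hkij) ⟨z j, rfl⟩
      · rw [hGx, ← hlin b _ ((2:ℤ)^a)]
        refine congrArg _ (funext fun j => ?_)
        simp only [Pi.add_apply, Finset.sum_apply, Pi.smul_apply, smul_eq_mul]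
        exact (digit_sum a (x j)).symm
  refine ⟨key, ?_⟩
  intro m
  rw [← key]
  refine ⟨fun _ => 0, ?_, m, ?_⟩
  · intro i hia
    rw [hS i]
    exact ⟨0, fun j => Or.inl rfl, fun j _ => rfl, by simp⟩
  · funext j
    simp
end

section
/- Correctness of the D_n closest-vector algorithm: let n ≥ 1, y ∈ ℝ^n, and let u ∈ ℤ^n satisfy |y_i − u_i| ≤ 1/2 for all i (a componentwise nearest-integer rounding of y). Let t* be an index maximizing |y_t − u_t| over t, and set v = u + e_{t*} if y_{t*} − u_{t*} > 0 and v = u − e_{t*} otherwise, where e_{t*} is the t*-th standard basis vector. Then: if u_1 + ⋯ + u_n is even, u is a closest vector to y in D_n (i.e., ‖y − u‖ ≤ ‖y − w‖ for all w ∈ D_n); otherwise v is a closest vector to y in D_n. -/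
lemma int_gap {u w : ℤ} (h : w ≠ u) : (1 : ℝ) ≤ |(u : ℝ) - (w : ℝ)| := by
  have h1 : (1 : ℤ) ≤ |u - w| := Int.one_le_abs (sub_ne_zero.mpr (Ne.symm h))
  have : ((1 : ℤ) : ℝ) ≤ ((|u - w| : ℤ) : ℝ) := by exact_mod_cast h1
  rw [Int.cast_abs] at this
  push_cast at this ⊢
  exact this

lemma abs_lb {y : ℝ} {u w : ℤ} (h : w ≠ u) :
    |(u : ℝ) - w| - |y - (u : ℝ)| ≤ |y - (w : ℝ)| := by
  have := abs_sub_abs_le_abs_sub ((u : ℝ) - w) ((u : ℝ) - y)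
  rw [show (u : ℝ) - w - ((u : ℝ) - y) = y - w by ring, abs_sub_comm (u : ℝ) y] at this
  linarith

lemma sq_nearest {y : ℝ} {u : ℤ} (h : |y - u| ≤ 1 / 2) (w : ℤ) :
    (y - (u : ℝ)) ^ 2 ≤ (y - (w : ℝ)) ^ 2 := by
  rcases eq_or_ne w u with rfl | hne
  · exact le_refl _
  · have h1 := int_gap hne
    have h2 := abs_lb (y := y) hne
    have h3 : |y - (u : ℝ)| ≤ |y - (w : ℝ)| := by linarith
    calc (y - (u : ℝ)) ^ 2 = |y - (u : ℝ)| ^ 2 := (sq_abs _).symm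
      _ ≤ |y - (w : ℝ)| ^ 2 := by
          apply pow_le_pow_left₀ (abs_nonneg _) h3
      _ = (y - (w : ℝ)) ^ 2 := sq_abs _

lemma sq_far {y : ℝ} {u w : ℤ} (h : |y - u| ≤ 1 / 2) (hne : w ≠ u) :
    (1 - |y - (u : ℝ)|) ^ 2 ≤ (y - (w : ℝ)) ^ 2 := by
  have h1 := int_gap hne
  have h2 := abs_lb (y := y) hne
  have h3 : 1 - |y - (u : ℝ)| ≤ |y - (w : ℝ)| := by linarith
  have h4 : (0 : ℝ) ≤ 1 - |y - (u : ℝ)| := by linarith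
  calc (1 - |y - (u : ℝ)|) ^ 2 ≤ |y - (w : ℝ)| ^ 2 := pow_le_pow_left₀ h4 h3 2
    _ = (y - (w : ℝ)) ^ 2 := sq_abs _

/-- correctness of the `D_n` closest-vector algorithm. If `u` rounds `y`
componentwise to nearest integers, `t*` maximizes `|y_t − u_t|`, and `v` is `u` with the
`t*`-th coordinate pushed towards `y`, then `u` is a closest vector to `y` in
`D_n = {w ∈ ℤⁿ : Σ w_i even}` when `Σ u_i` is even, and `v` is a closest vector otherwise. -/
theorem Dn_decoder_correct (n : ℕ) (hn : 1 ≤ n) (y : Fin n → ℝ) (u : Fin n → ℤ)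
    (hu : ∀ i, |y i - (u i : ℝ)| ≤ 1 / 2)
    (tstar : Fin n)
    (htstar : ∀ t, |y t - (u t : ℝ)| ≤ |y tstar - (u tstar : ℝ)|)
    (v : Fin n → ℤ)
    (hv : v = fun i => if i = tstar then
      (if 0 < y tstar - (u tstar : ℝ) then u tstar + 1 else u tstar - 1) else u i) :
    (Even (∑ i, u i) → ∀ w : Fin n → ℤ, Even (∑ i, w i) →
      _root_.enorm (fun i => y i - (u i : ℝ)) ≤ _root_.enorm (fun i => y i - (w i : ℝ))) ∧
    (¬ Even (∑ i, u i) → ∀ w : Fin n → ℤ, Even (∑ i, w i) →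
      _root_.enorm (fun i => y i - (v i : ℝ)) ≤ _root_.enorm (fun i => y i - (w i : ℝ))) := by
  constructor
  · intro _ w _
    apply Real.sqrt_le_sqrt
    exact Finset.sum_le_sum fun i _ => sq_nearest (hu i) (w i)
  · intro hodd w hw
    apply Real.sqrt_le_sqrt
    -- w ≠ u
    have hwu : w ≠ u := by
      rintro rfl; exact hodd hw
    obtain ⟨j, hj⟩ : ∃ j, w j ≠ u j := by
      by_contra hc
      push_neg at hc
      exact hwu (funext hc)
    set D := |y tstar - (u tstar : ℝ)| with hD
    -- value of v at tstar
    have hvt : (y tstar - (v tstar : ℝ)) ^ 2 = (1 - D) ^ 2 := by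
      subst hv
      simp only [if_pos rfl]
      by_cases hpos : 0 < y tstar - (u tstar : ℝ)
      · rw [if_pos hpos]
        push_cast
        rw [hD, abs_of_pos hpos]
        ring
      · rw [if_neg hpos]
        push_neg at hpos
        push_cast
        rw [hD, abs_of_nonpos (by linarith)]
        ring
    have hvi : ∀ i, i ≠ tstar → (y i - (v i : ℝ)) ^ 2 = (y i - (u i : ℝ)) ^ 2 := by
      intro i hi
      subst hv
      simp only [if_neg hi]
    -- sum for v
    have hsumv : ∑ i, (y i - (v i : ℝ)) ^ 2
        = (1 - D) ^ 2 + ∑ i ∈ Finset.univ.erase tstar, (y i - (u i : ℝ)) ^ 2 := by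
      rw [← Finset.add_sum_erase _ _ (Finset.mem_univ tstar), hvt]
      congr 1
      apply Finset.sum_congr rfl
      intro i hi
      exact hvi i (Finset.ne_of_mem_erase hi)
    -- sum for w, lower bound
    have hsumw : (1 - |y j - (u j : ℝ)|) ^ 2 + ∑ i ∈ Finset.univ.erase j, (y i - (u i : ℝ)) ^ 2
        ≤ ∑ i, (y i - (w i : ℝ)) ^ 2 := by
      rw [← Finset.add_sum_erase _ (fun i => (y i - (w i : ℝ)) ^ 2) (Finset.mem_univ j)]
      apply add_le_add (sq_far (hu j) hj)
      exact Finset.sum_le_sum fun i _ => sq_nearest (hu i) (w i)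
    -- combine: both sums relate to S := ∑ (y i - u i)^2
    have hS : ∀ k : Fin n, ∑ i ∈ Finset.univ.erase k, (y i - (u i : ℝ)) ^ 2
        = (∑ i, (y i - (u i : ℝ)) ^ 2) - (y k - (u k : ℝ)) ^ 2 := by
      intro k
      rw [← Finset.add_sum_erase _ (fun i => (y i - (u i : ℝ)) ^ 2) (Finset.mem_univ k)]
      ring
    rw [hsumv, hS tstar]
    have hkey : (1 - D) ^ 2 - D ^ 2 ≤ (1 - |y j - (u j : ℝ)|) ^ 2 - (y j - (u j : ℝ)) ^ 2 := by
      have h1 : |y j - (u j : ℝ)| ≤ D := htstar j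
      have h2 : (y j - (u j : ℝ)) ^ 2 = |y j - (u j : ℝ)| ^ 2 := (sq_abs _).symm
      nlinarith [abs_nonneg (y j - (u j : ℝ))]
    have hDsq : D ^ 2 = (y tstar - (u tstar : ℝ)) ^ 2 := sq_abs _
    rw [hS j] at hsumw
    nlinarith [hsumw]
end
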